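/- For every δ ∈ (−1/2, 0) ∪ (0, 1/2), the function y ↦ ((y+1)^δ − y^δ)² is integrable on (0,∞), i.e. ∫₀^∞ ((y+1)^δ − y^δ)² dy < ∞. -/

import Mathlib

open MeasureTheory Set

lemma power_increment_bound (δ : ℝ) (hδ : δ < 1) {y : ℝ} (hy : 1 ≤ y) :
    |(y + 1) ^ δ - y ^ δ| ≤ |δ| * y ^ (δ - 1) := by
  have hy0 : (0 : ℝ) < y := by linarith
  obtain ⟨c, hc, hderiv⟩ := exists_hasDerivAt_eq_slope (fun x : ℝ => x ^ δ)
    (fun x => δ * x ^ (δ - 1)) (by linarith : y < y + 1)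
    (by
      apply ContinuousOn.rpow_const continuousOn_id
      intro x hx
      exact Or.inl (by simp only [id]; rcases hx with ⟨h1, _⟩; intro h; linarith))
    (fun x hx => Real.hasDerivAt_rpow_const
      (Or.inl (by rcases hx with ⟨h1, _⟩; intro h; linarith)))
  have hslope : (y + 1) ^ δ - y ^ δ = δ * c ^ (δ - 1) := by
    rw [hderiv]; field_simp; ring
  rw [hslope, abs_mul]
  gcongr
  rw [abs_of_nonneg (Real.rpow_nonneg (by rcases hc with ⟨h1, _⟩; linarith) _)]
  exact Real.rpow_le_rpow_of_nonpos hy0 hc.1.le (by linarith)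

/-- For `δ ∈ (-1/2, 0) ∪ (0, 1/2)`, the function `y ↦ ((y+1)^δ - y^δ)²` is
(Lebesgue-)integrable on `(0, ∞)`. -/
theorem integrable_power_increment_sq
    (δ : ℝ) (hδ1 : -(1/2) < δ) (hδ2 : δ < 1/2) (hδ0 : δ ≠ 0) :
    IntegrableOn (fun y : ℝ => ((y + 1) ^ δ - y ^ δ) ^ 2) (Set.Ioi 0) := by
  have hcont : ContinuousOn (fun y : ℝ => ((y + 1) ^ δ - y ^ δ) ^ 2) (Ioi 0) := by
    apply ContinuousOn.pow
    apply ContinuousOn.sub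
    · exact ContinuousOn.rpow_const (by fun_prop) fun x hx => Or.inl (by
        simp only [mem_Ioi] at hx; intro h; linarith)
    · exact ContinuousOn.rpow_const (by fun_prop) fun x hx => Or.inl (ne_of_gt hx)
  have h01 : IntegrableOn (fun y : ℝ => ((y + 1) ^ δ - y ^ δ) ^ 2) (Ioc 0 1) := by
    have hi1 : IntegrableOn (fun y : ℝ => y ^ (δ * 2)) (Ioc 0 1) :=
      (intervalIntegral.intervalIntegrable_rpow' (by linarith)).1
    have hi2 : IntegrableOn (fun y : ℝ => (y + 1) ^ (δ * 2)) (Ioc 0 1) := by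
      refine (ContinuousOn.integrableOn_compact (isCompact_Icc (a := (0:ℝ)) (b := 1)) ?_).mono_set
        Ioc_subset_Icc_self
      apply ContinuousOn.rpow_const (by fun_prop)
      intro x hx
      exact Or.inl (by rcases hx with ⟨h1, _⟩; intro h; linarith)
    refine Integrable.mono' ((hi2.add hi1).const_mul 2)
      ((hcont.mono (Ioc_subset_Ioi_self.trans (by simp))).aestronglyMeasurable measurableSet_Ioc) ?_
    filter_upwards [ae_restrict_mem measurableSet_Ioc] with y hy
    rcases hy with ⟨hy0, hy1⟩
    have h1 : ((y + 1) ^ δ) ^ 2 = (y + 1) ^ (δ * 2) := by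
      rw [← Real.rpow_natCast ((y+1)^δ) 2, ← Real.rpow_mul (by positivity)]
      norm_num
    have h2 : (y ^ δ) ^ 2 = y ^ (δ * 2) := by
      rw [← Real.rpow_natCast (y^δ) 2, ← Real.rpow_mul hy0.le]
      norm_num
    simp only [Pi.add_apply]
    rw [Real.norm_eq_abs, abs_of_nonneg (by positivity), ← h1, ← h2]
    nlinarith [sq_nonneg ((y + 1) ^ δ + y ^ δ)]
  have h1 : IntegrableOn (fun y : ℝ => ((y + 1) ^ δ - y ^ δ) ^ 2) (Ioi 1) := by
    have hint : IntegrableOn (fun y : ℝ => δ ^ 2 * y ^ ((δ - 1) * 2)) (Ioi 1) :=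
      (integrableOn_Ioi_rpow_of_lt (by linarith) one_pos).const_mul _
    refine Integrable.mono' hint
      ((hcont.mono (Ioi_subset_Ioi zero_le_one)).aestronglyMeasurable measurableSet_Ioi) ?_
    filter_upwards [ae_restrict_mem measurableSet_Ioi] with y hy
    have hy1 : (1 : ℝ) ≤ y := le_of_lt hy
    have hy0 : (0 : ℝ) < y := by linarith
    rw [Real.norm_eq_abs, abs_of_nonneg (by positivity), ← sq_abs]
    calc |(y + 1) ^ δ - y ^ δ| ^ 2 ≤ (|δ| * y ^ (δ - 1)) ^ 2 :=
          pow_le_pow_left₀ (abs_nonneg _) (power_increment_bound δ (by linarith) hy1) 2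
      _ = δ ^ 2 * y ^ ((δ - 1) * 2) := by
          rw [mul_pow, sq_abs, ← Real.rpow_natCast (y ^ (δ - 1)) 2,
            ← Real.rpow_mul hy0.le]
          norm_num
  have hsplit : Ioi (0 : ℝ) = Ioc 0 1 ∪ Ioi 1 := (Set.Ioc_union_Ioi_eq_Ioi (by norm_num)).symm
  rw [hsplit]
  exact h01.union h1
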